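/- Let f : L⁰(ℱ, ℝ) → L⁰(ℱ, ℝ) be L⁰-convex and local, and suppose f is bounded on some ball {x : |x| ≤ ε·1} around 0 (ε > 0 real), i.e., there exists M ∈ L⁰ with f(x) ≤ M for all such x. Then f is continuous at 0 with respect to the topology of convergence in probability. -/

import Mathlib

open MeasureTheory Filter Topology Pointwise

variable {Ω : Type*} [MeasurableSpace Ω] {μ : Measure Ω}

/-- `L⁰(ℱ, ℝ)` as a commutative ring: `AEEqFun` with pointwise a.e. operations. -/
noncomputable instance AEEqFun.commRing : CommRing (Ω →ₘ[μ] ℝ) :=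
  { AEEqFun.instAddCommGroup, AEEqFun.instCommMonoid with
    left_distrib := fun a b c => by
      apply AEEqFun.ext
      filter_upwards [AEEqFun.coeFn_mul a (b + c), AEEqFun.coeFn_add b c,
        AEEqFun.coeFn_add (a * b) (a * c), AEEqFun.coeFn_mul a b, AEEqFun.coeFn_mul a c]
        with w h1 h2 h3 h4 h5
      simp [h1, h2, h3, h4, h5, mul_add]
    right_distrib := fun a b c => by
      apply AEEqFun.ext
      filter_upwards [AEEqFun.coeFn_mul (a + b) c, AEEqFun.coeFn_add a b,
        AEEqFun.coeFn_add (a * c) (b * c), AEEqFun.coeFn_mul a c, AEEqFun.coeFn_mul b c]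
        with w h1 h2 h3 h4 h5
      simp [h1, h2, h3, h4, h5, add_mul]
    zero_mul := fun a => by
      apply AEEqFun.ext
      filter_upwards [AEEqFun.coeFn_mul 0 a, AEEqFun.coeFn_zero (β := ℝ) (μ := μ)]
        with w h1 h2
      simp [h1, h2]
    mul_zero := fun a => by
      apply AEEqFun.ext
      filter_upwards [AEEqFun.coeFn_mul a 0, AEEqFun.coeFn_zero (β := ℝ) (μ := μ)]
        with w h1 h2
      simp [h1, h2] }

/-- The equivalence class `I_A` of the indicator function of a measurable set `A`. -/
noncomputable def indFun (A : Set Ω) (hA : MeasurableSet A) : Ω →ₘ[μ] ℝ :=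
  AEEqFun.mk (A.indicator fun _ => (1 : ℝ))
    ((measurable_one.indicator hA).aestronglyMeasurable)

/-- An `L⁰`-convex function on an `L⁰(ℱ,ℝ)`-module `E`. -/
def L0ConvexFun {E : Type*} [AddCommGroup E] [Module (Ω →ₘ[μ] ℝ) E]
    (f : E → Ω →ₘ[μ] ℝ) : Prop :=
  ∀ x y : E, ∀ ξ : Ω →ₘ[μ] ℝ, 0 ≤ ξ → ξ ≤ 1 →
    f (ξ • x + (1 - ξ) • y) ≤ ξ * f x + (1 - ξ) * f y

/-- An `L⁰`-convex subset of an `L⁰(ℱ,ℝ)`-module `E`. -/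
def L0ConvexSet {E : Type*} [AddCommGroup E] [Module (Ω →ₘ[μ] ℝ) E]
    (G : Set E) : Prop :=
  ∀ x ∈ G, ∀ y ∈ G, ∀ ξ : Ω →ₘ[μ] ℝ, 0 ≤ ξ → ξ ≤ 1 → ξ • x + (1 - ξ) • y ∈ G

/-- The subdifferential of `f` at `x`, a set of `L⁰`-linear maps `E →ₗ[L⁰] L⁰`. -/
def L0Subdiff {E : Type*} [AddCommGroup E] [Module (Ω →ₘ[μ] ℝ) E]
    (f : E → Ω →ₘ[μ] ℝ) (x : E) : Set (E →ₗ[Ω →ₘ[μ] ℝ] (Ω →ₘ[μ] ℝ)) :=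
  {u | ∀ y : E, u (y - x) ≤ f y - f x}

/-- The metric of convergence in probability on `L⁰(ℱ,ℝ)`. -/
noncomputable def probDist (f g : Ω →ₘ[μ] ℝ) : ℝ :=
  ∫ w, |f w - g w| / (1 + |f w - g w|) ∂μ

private lemma frac_mono' {t s : ℝ} (ht : 0 ≤ t) (hts : t ≤ s) :
    t / (1 + t) ≤ s / (1 + s) := by
  have h1 : (0:ℝ) < 1 + t := by linarith
  have h2 : (0:ℝ) < 1 + s := by linarith
  rw [div_le_div_iff₀ h1 h2]; nlinarith

private lemma frac_le_one' {t : ℝ} (ht : 0 ≤ t) : t / (1 + t) ≤ 1 := by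
  rw [div_le_one (by linarith)]; linarith

private lemma integ_aux' [IsProbabilityMeasure μ] {g : Ω → ℝ}
    (hg : AEStronglyMeasurable g μ) (h1 : ∀ w, |g w| ≤ 1) : Integrable g μ :=
  (integrable_const (1:ℝ)).mono' hg (Eventually.of_forall fun w => by
    simpa using h1 w)

/-- Key pointwise estimate: on the set where `|x| ≤ lam * ε`, one has
`|f x - f 0| ≤ lam * |M - f 0|` almost everywhere. -/
private lemma key_estimate [IsProbabilityMeasure μ]
    (f : (Ω →ₘ[μ] ℝ) → (Ω →ₘ[μ] ℝ)) (hconv : L0ConvexFun f)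
    (hloc : ∀ (B : Set Ω) (hB : MeasurableSet B) (x y : Ω →ₘ[μ] ℝ),
      indFun (μ := μ) B hB * x = indFun (μ := μ) B hB * y →
      indFun (μ := μ) B hB * f x = indFun (μ := μ) B hB * f y)
    {ε : ℝ} (hε : 0 < ε) (M : Ω →ₘ[μ] ℝ)
    (hb : ∀ x : Ω →ₘ[μ] ℝ, (∀ᵐ w ∂μ, |x w| ≤ ε) → f x ≤ M)
    {lam : ℝ} (hl0 : 0 < lam) (hl1 : lam ≤ 1) (x : Ω →ₘ[μ] ℝ) :
    ∀ᵐ w ∂μ, |x w| ≤ lam * ε → |f x w - f 0 w| ≤ lam * |M w - f 0 w| := by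
  set A : Set Ω := {w | |x w| ≤ lam * ε} with hAdef
  have hA : MeasurableSet A := measurableSet_le x.measurable.abs measurable_const
  set ι : Ω →ₘ[μ] ℝ := indFun (μ := μ) A hA with hιdef
  have hι : ⇑ι =ᵐ[μ] A.indicator (fun _ => (1:ℝ)) := AEEqFun.coeFn_mk _ _
  set y : Ω →ₘ[μ] ℝ := ι * x with hydef
  have hιsq : ι * ι = ι := by
    apply AEEqFun.ext
    filter_upwards [AEEqFun.coeFn_mul ι ι, hι] with w h1 h2
    rw [h1]; simp only [Pi.mul_apply, h2]
    by_cases hw : w ∈ A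
    · simp [Set.indicator_of_mem hw]
    · simp [Set.indicator_of_notMem hw]
  have claim1 : ι * y = ι * x := by rw [hydef, ← mul_assoc, hιsq]
  have hfa : ι * f y = ι * f x := hloc A hA y x claim1
  have hy : ∀ᵐ w ∂μ, |y w| ≤ lam * ε := by
    filter_upwards [AEEqFun.coeFn_mul ι x, hι] with w h1 h2
    rw [h1]; simp only [Pi.mul_apply, h2]
    by_cases hw : w ∈ A
    · rw [Set.indicator_of_mem hw, one_mul]; exact hw
    · simp only [Set.indicator_of_notMem hw, zero_mul, abs_zero]
      positivity
  set z : Ω →ₘ[μ] ℝ := lam⁻¹ • y with hzdef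
  have hzc : ⇑z =ᵐ[μ] fun w => lam⁻¹ * y w := by
    filter_upwards [AEEqFun.coeFn_smul lam⁻¹ y] with w h1
    simpa [smul_eq_mul] using h1
  have hz : ∀ᵐ w ∂μ, |z w| ≤ ε := by
    filter_upwards [hzc, hy] with w h1 h2
    rw [h1, abs_mul, abs_inv, abs_of_pos hl0]
    calc lam⁻¹ * |y w| ≤ lam⁻¹ * (lam * ε) := by
          exact mul_le_mul_of_nonneg_left h2 (by positivity)
      _ = ε := by field_simp
  have hz' : ∀ᵐ w ∂μ, |(-z) w| ≤ ε := by
    filter_upwards [AEEqFun.coeFn_neg z, hz] with w h1 h2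
    rw [h1]; simpa using h2
  have hfz : ∀ᵐ w ∂μ, f z w ≤ M w := AEEqFun.coeFn_le.2 (hb z hz)
  have hfz' : ∀ᵐ w ∂μ, f (-z) w ≤ M w := AEEqFun.coeFn_le.2 (hb (-z) hz')
  -- upper bound via convexity with ξ = lam
  set ξ : Ω →ₘ[μ] ℝ := AEEqFun.const Ω lam with hξdef
  have hξc : ⇑ξ =ᵐ[μ] fun _ => lam := AEEqFun.coeFn_const Ω lam
  have hξ0 : (0 : Ω →ₘ[μ] ℝ) ≤ ξ := by
    rw [← AEEqFun.coeFn_le]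
    filter_upwards [hξc, AEEqFun.coeFn_zero (β := ℝ) (μ := μ)] with w h1 h2
    rw [h1, h2]; exact hl0.le
  have hξ1 : ξ ≤ (1 : Ω →ₘ[μ] ℝ) := by
    rw [← AEEqFun.coeFn_le]
    filter_upwards [hξc, AEEqFun.coeFn_one (β := ℝ) (μ := μ)] with w h1 h2
    rw [h1, h2]; exact hl1
  have heq1 : ξ • z + (1 - ξ) • (0 : Ω →ₘ[μ] ℝ) = y := by
    rw [smul_zero, add_zero, smul_eq_mul]
    apply AEEqFun.ext
    filter_upwards [AEEqFun.coeFn_mul ξ z, hξc, hzc] with w h1 h2 h3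
    rw [h1]; simp only [Pi.mul_apply, h2, h3]
    rw [← mul_assoc, mul_inv_cancel₀ hl0.ne', one_mul]
  have h1 := hconv z 0 ξ hξ0 hξ1
  rw [heq1] at h1
  have hub : ∀ᵐ w ∂μ, f y w - f 0 w ≤ lam * (M w - f 0 w) := by
    filter_upwards [AEEqFun.coeFn_le.2 h1, hfz,
      AEEqFun.coeFn_add (ξ * f z) ((1 - ξ) * f 0), AEEqFun.coeFn_mul ξ (f z),
      AEEqFun.coeFn_mul (1 - ξ) (f 0), AEEqFun.coeFn_sub (1 : Ω →ₘ[μ] ℝ) ξ,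
      AEEqFun.coeFn_one (β := ℝ) (μ := μ), hξc] with w e1 e2 e3 e4 e5 e6 e7 e8
    rw [e3] at e1
    simp only [Pi.add_apply, e4, e5, Pi.mul_apply, e6, Pi.sub_apply, e7, e8,
      Pi.one_apply] at e1
    nlinarith [e1, e2, hl0]
  -- lower bound via convexity with ξ₂ = 1/(1+lam)
  have h1lam : (0:ℝ) < 1 + lam := by linarith
  set ξ₂ : Ω →ₘ[μ] ℝ := AEEqFun.const Ω (1 / (1 + lam)) with hξ₂def
  have hξ₂c : ⇑ξ₂ =ᵐ[μ] fun _ => 1 / (1 + lam) := AEEqFun.coeFn_const Ω _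
  have hξ₂0 : (0 : Ω →ₘ[μ] ℝ) ≤ ξ₂ := by
    rw [← AEEqFun.coeFn_le]
    filter_upwards [hξ₂c, AEEqFun.coeFn_zero (β := ℝ) (μ := μ)] with w e1 e2
    rw [e1, e2]; positivity
  have hξ₂1 : ξ₂ ≤ (1 : Ω →ₘ[μ] ℝ) := by
    rw [← AEEqFun.coeFn_le]
    filter_upwards [hξ₂c, AEEqFun.coeFn_one (β := ℝ) (μ := μ)] with w e1 e2
    rw [e1, e2]
    show (1:ℝ) / (1 + lam) ≤ 1
    rw [div_le_one h1lam]; linarith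
  have heq2 : ξ₂ • y + (1 - ξ₂) • (-z) = 0 := by
    rw [smul_eq_mul, smul_eq_mul]
    apply AEEqFun.ext
    filter_upwards [AEEqFun.coeFn_add (ξ₂ * y) ((1 - ξ₂) * (-z)),
      AEEqFun.coeFn_mul ξ₂ y, AEEqFun.coeFn_mul (1 - ξ₂) (-z),
      AEEqFun.coeFn_sub (1 : Ω →ₘ[μ] ℝ) ξ₂, AEEqFun.coeFn_one (β := ℝ) (μ := μ),
      hξ₂c, AEEqFun.coeFn_neg z, hzc, AEEqFun.coeFn_zero (β := ℝ) (μ := μ)]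
      with w e1 e2 e3 e4 e5 e6 e7 e8 e9
    rw [e1]
    simp only [Pi.add_apply, e2, e3, Pi.mul_apply, e4, Pi.sub_apply, e5,
      Pi.one_apply, e6, e7, Pi.neg_apply, e8, e9, Pi.zero_apply]
    field_simp
    ring
  have h2 := hconv y (-z) ξ₂ hξ₂0 hξ₂1
  rw [heq2] at h2
  have hlb : ∀ᵐ w ∂μ, -(lam * (M w - f 0 w)) ≤ f y w - f 0 w := by
    filter_upwards [AEEqFun.coeFn_le.2 h2, hfz',
      AEEqFun.coeFn_add (ξ₂ * f y) ((1 - ξ₂) * f (-z)),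
      AEEqFun.coeFn_mul ξ₂ (f y), AEEqFun.coeFn_mul (1 - ξ₂) (f (-z)),
      AEEqFun.coeFn_sub (1 : Ω →ₘ[μ] ℝ) ξ₂, AEEqFun.coeFn_one (β := ℝ) (μ := μ),
      hξ₂c] with w e1 e2 e3 e4 e5 e6 e7 e8
    rw [e3] at e1
    simp only [Pi.add_apply, e4, e5, Pi.mul_apply, e6, Pi.sub_apply, e7, e8,
      Pi.one_apply] at e1
    have hrw : (1 / (1 + lam)) * f y w + (1 - 1 / (1 + lam)) * f (-z) w
        = (f y w + lam * f (-z) w) / (1 + lam) := by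
      field_simp
      ring
    rw [hrw, le_div_iff₀ h1lam] at e1
    nlinarith [e1, e2, hl0]
  have hfeq : ∀ᵐ w ∂μ, (ι * f y) w = (ι * f x) w := by
    rw [hfa]
    exact Eventually.of_forall fun _ => rfl
  filter_upwards [hfeq, AEEqFun.coeFn_mul ι (f y), AEEqFun.coeFn_mul ι (f x),
    hι, hub, hlb] with w e1 e2 e3 e4 e5 e6 hw
  have hwA : w ∈ A := hw
  rw [e2, e3] at e1
  simp only [Pi.mul_apply, e4, Set.indicator_of_mem hwA, one_mul] at e1
  rw [← e1]
  have habs := le_abs_self (M w - f 0 w)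
  have habs' := neg_abs_le (M w - f 0 w)
  rw [abs_le]
  constructor
  · nlinarith [e6, hl0]
  · nlinarith [e5, hl0]

/-- Main quantitative estimate. -/
private lemma main_estimate [IsProbabilityMeasure μ]
    (f : (Ω →ₘ[μ] ℝ) → (Ω →ₘ[μ] ℝ)) (hconv : L0ConvexFun f)
    (hloc : ∀ (B : Set Ω) (hB : MeasurableSet B) (x y : Ω →ₘ[μ] ℝ),
      indFun (μ := μ) B hB * x = indFun (μ := μ) B hB * y →
      indFun (μ := μ) B hB * f x = indFun (μ := μ) B hB * f y)
    {ε : ℝ} (hε : 0 < ε) (M : Ω →ₘ[μ] ℝ)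
    (hb : ∀ x : Ω →ₘ[μ] ℝ, (∀ᵐ w ∂μ, |x w| ≤ ε) → f x ≤ M)
    {lam : ℝ} (hl0 : 0 < lam) (hl1 : lam ≤ 1) (x : Ω →ₘ[μ] ℝ) :
    probDist (f x) (f 0) ≤
      (∫ w, lam * |M w - f 0 w| / (1 + lam * |M w - f 0 w|) ∂μ)
        + ((1 + lam * ε) / (lam * ε)) * probDist x 0 := by
  set c : ℝ := lam * ε with hcdef
  have hc : 0 < c := by positivity
  set κ : ℝ := (1 + c) / c with hκdef
  have hκ0 : 0 < κ := by positivity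
  set D : Ω → ℝ := fun w => |f x w - f 0 w| / (1 + |f x w - f 0 w|) with hDdef
  set G : Ω → ℝ := fun w => lam * |M w - f 0 w| / (1 + lam * |M w - f 0 w|)
    with hGdef
  set Q : Ω → ℝ := fun w => |x w - (0 : Ω →ₘ[μ] ℝ) w| /
    (1 + |x w - (0 : Ω →ₘ[μ] ℝ) w|) with hQdef
  have hDm : AEStronglyMeasurable D μ := by
    have : Measurable D := by
      have m1 : Measurable fun w => |f x w - f 0 w| :=
        ((f x).measurable.sub (f 0).measurable).abs
      exact m1.div (measurable_const.add m1)
    exact this.aestronglyMeasurable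
  have hGm : AEStronglyMeasurable G μ := by
    have : Measurable G := by
      have m1 : Measurable fun w => lam * |M w - f 0 w| :=
        (M.measurable.sub (f 0).measurable).abs.const_mul lam
      exact m1.div (measurable_const.add m1)
    exact this.aestronglyMeasurable
  have hQm : AEStronglyMeasurable Q μ := by
    have : Measurable Q := by
      have m1 : Measurable fun w => |x w - (0 : Ω →ₘ[μ] ℝ) w| :=
        (x.measurable.sub (0 : Ω →ₘ[μ] ℝ).measurable).abs
      exact m1.div (measurable_const.add m1)
    exact this.aestronglyMeasurable
  have hDb : ∀ w, |D w| ≤ 1 := fun w => by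
    rw [abs_of_nonneg (by positivity)]
    exact frac_le_one' (abs_nonneg _)
  have hGb : ∀ w, |G w| ≤ 1 := fun w => by
    rw [abs_of_nonneg (by positivity)]
    exact frac_le_one' (by positivity)
  have hQb : ∀ w, |Q w| ≤ 1 := fun w => by
    rw [abs_of_nonneg (by positivity)]
    exact frac_le_one' (abs_nonneg _)
  have hDi : Integrable D μ := integ_aux' hDm hDb
  have hGi : Integrable G μ := integ_aux' hGm hGb
  have hQi : Integrable Q μ := integ_aux' hQm hQb
  have hkey := key_estimate f hconv hloc hε M hb hl0 hl1 x
  have hpt : ∀ᵐ w ∂μ, D w ≤ G w + κ * Q w := by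
    filter_upwards [hkey, AEEqFun.coeFn_zero (β := ℝ) (μ := μ)] with w hk h0
    have hQeq : Q w = |x w| / (1 + |x w|) := by
      simp only [hQdef, h0, Pi.zero_apply, sub_zero]
    by_cases hw : |x w| ≤ c
    · have h1 : D w ≤ G w := frac_mono' (abs_nonneg _) (hk hw)
      have h2 : 0 ≤ κ * Q w := by positivity
      linarith
    · push_neg at hw
      have h1 : D w ≤ 1 := frac_le_one' (abs_nonneg _)
      have h2 : c / (1 + c) ≤ Q w := by
        rw [hQeq]; exact frac_mono' hc.le hw.le
      have h3 : κ * (c / (1 + c)) = 1 := by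
        rw [hκdef]; field_simp
      have h4 : 0 ≤ G w := by positivity
      have h5 : κ * (c / (1 + c)) ≤ κ * Q w :=
        mul_le_mul_of_nonneg_left h2 hκ0.le
      rw [h3] at h5
      linarith
  have hmono : probDist (f x) (f 0) ≤ ∫ w, G w + κ * Q w ∂μ := by
    have : probDist (f x) (f 0) = ∫ w, D w ∂μ := rfl
    rw [this]
    exact integral_mono_ae hDi (hGi.add (hQi.const_mul κ)) hpt
  have hsplit : ∫ w, (G w + κ * Q w) ∂μ = (∫ w, G w ∂μ) + κ * ∫ w, Q w ∂μ := by
    rw [integral_add hGi (hQi.const_mul κ), integral_const_mul]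
  have : probDist x 0 = ∫ w, Q w ∂μ := rfl
  rw [hsplit, ← this] at hmono
  exact hmono

/-- An `L⁰`-convex local function `f : L⁰ → L⁰` bounded above on a ball
`{x : |x| ≤ ε}` around `0` is continuous at `0` for convergence in probability. -/
theorem l0Convex_bounded_continuous_at_zero [IsProbabilityMeasure μ]
    (f : (Ω →ₘ[μ] ℝ) → (Ω →ₘ[μ] ℝ)) (hconv : L0ConvexFun f)
    (hloc : ∀ (B : Set Ω) (hB : MeasurableSet B) (x y : Ω →ₘ[μ] ℝ),
      indFun (μ := μ) B hB * x = indFun (μ := μ) B hB * y → indFun (μ := μ) B hB * f x = indFun (μ := μ) B hB * f y)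
    (ε : ℝ) (hε : 0 < ε) (M : Ω →ₘ[μ] ℝ)
    (hb : ∀ x : Ω →ₘ[μ] ℝ, (∀ᵐ w ∂μ, |x w| ≤ ε) → f x ≤ M) :
    ∀ u : ℕ → Ω →ₘ[μ] ℝ, Tendsto (fun n => probDist (u n) 0) atTop (𝓝 0) →
      Tendsto (fun n => probDist (f (u n)) (f 0)) atTop (𝓝 0) := by
  intro u hu
  have hnn : ∀ n, 0 ≤ probDist (f (u n)) (f 0) := fun n =>
    integral_nonneg fun w => by positivity
  rw [Metric.tendsto_atTop]
  intro δ hδ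
  set F : ℕ → Ω → ℝ := fun k w =>
    ((k : ℝ) + 1)⁻¹ * |M w - f 0 w| / (1 + ((k : ℝ) + 1)⁻¹ * |M w - f 0 w|)
    with hF
  have hFm : ∀ k, AEStronglyMeasurable (F k) μ := by
    intro k
    have m1 : Measurable fun w => ((k : ℝ) + 1)⁻¹ * |M w - f 0 w| :=
      (M.measurable.sub (f 0).measurable).abs.const_mul _
    exact (m1.div (measurable_const.add m1)).aestronglyMeasurable
  have hFb : ∀ k, ∀ᵐ w ∂μ, ‖F k w‖ ≤ (1 : ℝ) := fun k =>
    Eventually.of_forall fun w => by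
      rw [Real.norm_eq_abs, abs_of_nonneg (by positivity)]
      exact frac_le_one' (by positivity)
  have hlim : ∀ᵐ w ∂μ, Tendsto (fun k => F k w) atTop (𝓝 0) := by
    refine Eventually.of_forall fun w => ?_
    have h1 : Tendsto (fun k : ℕ => ((k : ℝ) + 1)⁻¹ * |M w - f 0 w|)
        atTop (𝓝 0) := by
      have h0 : Tendsto (fun n : ℕ => 1 / ((n : ℝ) + 1)) atTop (𝓝 0) :=
        tendsto_one_div_add_atTop_nhds_zero_nat
      simpa [one_div] using h0.mul_const (|M w - f 0 w|)
    have h2 : Tendsto (fun k : ℕ => 1 + ((k : ℝ) + 1)⁻¹ * |M w - f 0 w|)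
        atTop (𝓝 1) := by
      simpa using tendsto_const_nhds.add h1
    have h3 := h1.div h2 one_ne_zero
    rw [zero_div] at h3; exact h3
  have hG : Tendsto (fun k => ∫ w, F k w ∂μ) atTop (𝓝 (∫ _, (0:ℝ) ∂μ)) :=
    tendsto_integral_of_dominated_convergence (fun _ => (1 : ℝ)) hFm
      (integrable_const 1) hFb hlim
  rw [integral_zero] at hG
  obtain ⟨k, hk⟩ : ∃ k, ∫ w, F k w ∂μ < δ / 2 :=
    (hG.eventually (gt_mem_nhds (by linarith : (0:ℝ) < δ / 2))).exists
  set lam : ℝ := ((k : ℝ) + 1)⁻¹ with hlam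
  have hl0 : 0 < lam := by rw [hlam]; positivity
  have hl1 : lam ≤ 1 := by
    rw [hlam]
    have hk1 : (1 : ℝ) ≤ (k : ℝ) + 1 := by
      have := Nat.cast_nonneg (α := ℝ) k; linarith
    exact inv_le_one_of_one_le₀ hk1
  set c : ℝ := lam * ε with hc
  have hc0 : 0 < c := by rw [hc]; positivity
  set κ : ℝ := (1 + c) / c with hκ
  have hκt : Tendsto (fun n => κ * probDist (u n) 0) atTop (𝓝 0) := by
    simpa using hu.const_mul κ
  have hev : ∀ᶠ n in atTop, κ * probDist (u n) 0 < δ / 2 :=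
    hκt.eventually (gt_mem_nhds (by linarith))
  obtain ⟨N, hN⟩ := eventually_atTop.1 hev
  refine ⟨N, fun n hn => ?_⟩
  have hest := main_estimate f hconv hloc hε M hb hl0 hl1 (u n)
  rw [Real.dist_eq, sub_zero, abs_of_nonneg (hnn n)]
  have hFk : (∫ w, lam * |M w - f 0 w| / (1 + lam * |M w - f 0 w|) ∂μ)
      = ∫ w, F k w ∂μ := rfl
  rw [hFk] at hest
  have := hN n hn
  calc probDist (f (u n)) (f 0)
      ≤ (∫ w, F k w ∂μ) + κ * probDist (u n) 0 := hest
    _ < δ / 2 + δ / 2 := by exact add_lt_add hk this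
    _ = δ := by ring
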